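/- For all d ≥ 1, t ≥ 1 and all permutations π, σ of Fin t, the trace of the matrix product W_π · W_σ (permutation operators of local dimension d) equals d^{c(π∘σ)}, where c(π∘σ) is the number of cycles of the composite permutation π∘σ. (This is the Gram matrix Q_{π,σ} = d^{cycles(πσ)} of the permutation operators, used throughout the paper's Weingarten calculus.) -/

import Mathlib

open Matrix

noncomputable section

/-- Permutation operator `W_π` of local index `I`: `W_π[b,a] = 1` iff `b = a ∘ π`. -/
def permOp (I : Type*) [DecidableEq I] {t : ℕ} (π : Equiv.Perm (Fin t)) :
    Matrix (Fin t → I) (Fin t → I) ℂ :=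
  Matrix.of fun b a => if b = a ∘ ⇑π then 1 else 0

/-- The number of cycles of a permutation of `Fin t`: the number of orbits of the
subgroup it generates (fixed points count as cycles of length 1). -/
def cycleCount {t : ℕ} (τ : Equiv.Perm (Fin t)) : ℕ :=
  Nat.card (MulAction.orbitRel.Quotient (Subgroup.zpowers τ) (Fin t))

lemma cycleCount_conj {t : ℕ} (g τ : Equiv.Perm (Fin t)) :
    cycleCount (g * τ * g⁻¹) = cycleCount τ := by
  unfold cycleCount
  apply Nat.card_congr
  refine Quotient.congr g.symm ?_
  intro x y
  constructor
  · rintro ⟨⟨u, hu⟩, huy⟩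
    obtain ⟨k, hk⟩ := Subgroup.mem_zpowers_iff.mp hu
    refine ⟨⟨τ ^ k, Subgroup.zpow_mem _ (Subgroup.mem_zpowers τ) k⟩, ?_⟩
    have : u y = x := huy
    rw [← hk] at this
    have hconj : (g * τ * g⁻¹) ^ k = g * τ ^ k * g⁻¹ := conj_zpow
    rw [hconj] at this
    simp only [Equiv.Perm.mul_apply] at this
    have := congrArg g.symm this
    simpa using this
  · rintro ⟨⟨u, hu⟩, huy⟩
    obtain ⟨k, hk⟩ := Subgroup.mem_zpowers_iff.mp hu
    refine ⟨⟨(g * τ * g⁻¹) ^ k, Subgroup.zpow_mem _ (Subgroup.mem_zpowers _) k⟩, ?_⟩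
    have : u (g.symm y) = g.symm x := huy
    rw [← hk] at this
    show ((g * τ * g⁻¹) ^ k) y = x
    rw [conj_zpow]
    simp only [Equiv.Perm.mul_apply]
    have := congrArg g this
    simpa using this

lemma card_fixed_fun {t d : ℕ} (τ : Equiv.Perm (Fin t)) :
    Nat.card {a : Fin t → Fin d // a ∘ ⇑τ = a} = d ^ cycleCount τ := by
  have inv_all : ∀ (a : Fin t → Fin d), a ∘ ⇑τ = a →
      ∀ u ∈ Subgroup.zpowers τ, ∀ x, a (u x) = a x := by
    intro a ha
    let H : Subgroup (Equiv.Perm (Fin t)) :=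
      { carrier := {g | ∀ x, a (g x) = a x}
        one_mem' := by intro x; rfl
        mul_mem' := by
          intro g h hg hh x
          simp only [Set.mem_setOf_eq] at hg hh ⊢
          rw [Equiv.Perm.mul_apply, hg, hh]
        inv_mem' := by
          intro g hg x
          simp only [Set.mem_setOf_eq] at hg ⊢
          have := hg (g⁻¹ x)
          simpa using this.symm }
    have hτH : τ ∈ H := fun x => congrFun ha x
    exact fun u hu => Subgroup.zpowers_le.mpr hτH hu
  have E : {a : Fin t → Fin d // a ∘ ⇑τ = a} ≃
      (MulAction.orbitRel.Quotient (Subgroup.zpowers τ) (Fin t) → Fin d) := by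
    refine
      { toFun := fun a => Quotient.lift a.1 ?_
        invFun := fun f => ⟨fun x => f (Quotient.mk _ x), ?_⟩
        left_inv := ?_
        right_inv := ?_ }
    · rintro x y ⟨⟨u, hu⟩, huy⟩
      have : u y = x := huy
      rw [← this]
      exact inv_all a.1 a.2 u hu y
    · funext x
      dsimp only [Function.comp]
      refine congrArg f (Quotient.sound ?_)
      exact ⟨⟨τ, Subgroup.mem_zpowers τ⟩, rfl⟩
    · intro a; ext x; rfl
    · intro f; funext q
      induction q using Quotient.inductionOn
      rfl
  rw [Nat.card_congr E, Nat.card_fun, Nat.card_eq_fintype_card (α := Fin d),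
    Fintype.card_fin]
  rfl

theorem stmt_3 (d t : ℕ) (hd : 1 ≤ d) (ht : 1 ≤ t) (π σ : Equiv.Perm (Fin t)) :
    (permOp (Fin d) π * permOp (Fin d) σ).trace = (d : ℂ) ^ cycleCount (π * σ) := by
  classical
  have hdiag : ∀ a : Fin t → Fin d,
      (permOp (Fin d) π * permOp (Fin d) σ) a a =
        if a ∘ ⇑(σ * π) = a then 1 else 0 := by
    intro a
    rw [Matrix.mul_apply]
    have h1 : ∀ b, permOp (Fin d) π a b * permOp (Fin d) σ b a =
        if b = a ∘ ⇑σ then (if a = b ∘ ⇑π then (1 : ℂ) else 0) else 0 := by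
      intro b
      simp only [permOp, Matrix.of_apply]
      rw [mul_comm, ite_mul, one_mul, zero_mul]
    simp only [h1]
    rw [Finset.sum_ite_eq' Finset.univ (a ∘ ⇑σ)]
    simp only [Finset.mem_univ, if_true]
    have : (a = (a ∘ ⇑σ) ∘ ⇑π) ↔ (a ∘ ⇑(σ * π) = a) := by
      rw [Equiv.Perm.coe_mul, eq_comm]
      rfl
    simp [this]
    exact if_congr Iff.rfl rfl rfl
  rw [Matrix.trace]
  simp only [Matrix.diag, hdiag]
  rw [Finset.sum_boole]
  have hcard : (Finset.univ.filter fun a : Fin t → Fin d => a ∘ ⇑(σ * π) = a).card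
      = d ^ cycleCount (σ * π) := by
    rw [← card_fixed_fun (σ * π), Nat.card_eq_fintype_card, Fintype.card_subtype]
  have hc : cycleCount (σ * π) = cycleCount (π * σ) := by
    have : σ * (π * σ) * σ⁻¹ = σ * π := by group
    rw [← this, cycleCount_conj]
  rw [hcard, hc]
  push_cast
  ring
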